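/- Let n be even with n congruent to 2 modulo 4. Then there exist n/2 pairwise edge-disjoint perfect matchings of K_n whose removal leaves a graph with no perfect matching. Consequently, the matching persistency of K_n equals n/2 in this case. -/

import Mathlib

open Finset

variable {n : ℕ}

/-- endpoints of a `Sym2` as a `Finset`. -/
def ends (e : Sym2 (Fin n)) : Finset (Fin n) := Finset.univ.filter (· ∈ e)

@[simp] lemma mem_ends {v : Fin n} {e : Sym2 (Fin n)} : v ∈ ends e ↔ v ∈ e := by
  simp [ends]

lemma ends_mk {x y : Fin n} : ends s(x, y) = {x, y} := by
  ext v; simp [Sym2.mem_iff]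

lemma card_ends {e : Sym2 (Fin n)} (h : ¬ e.IsDiag) : (ends e).card = 2 := by
  induction e using Sym2.ind with
  | _ x y =>
    rw [ends_mk, card_pair]
    exact fun hxy => h (by simp [hxy])

/-- `M` is a matching given as a finset of edges of `G`. -/
def IsFM (G : SimpleGraph (Fin n)) (M : Finset (Sym2 (Fin n))) : Prop :=
  (∀ e ∈ M, e ∈ G.edgeSet) ∧
    ∀ e ∈ M, ∀ f ∈ M, e ≠ f → ∀ x : Fin n, x ∈ e → x ∉ f

def Covered (M : Finset (Sym2 (Fin n))) (v : Fin n) : Prop := ∃ e ∈ M, v ∈ e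

instance (M : Finset (Sym2 (Fin n))) : DecidablePred (Covered M) := fun v =>
  decidable_of_iff (∃ e ∈ M, v ∈ e) Iff.rfl

lemma covered_filter_eq {G : SimpleGraph (Fin n)} {M : Finset (Sym2 (Fin n))}
    (hM : IsFM G M) : Finset.univ.filter (Covered M) = M.biUnion ends := by
  ext v
  simp [Covered]

lemma card_covered {G : SimpleGraph (Fin n)} {M : Finset (Sym2 (Fin n))}
    (hM : IsFM G M) : (Finset.univ.filter (Covered M)).card = 2 * M.card := by
  rw [covered_filter_eq hM, card_biUnion]
  · rw [Finset.sum_congr rfl fun e he => card_ends (G.not_isDiag_of_mem_edgeSet (hM.1 e he))]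
    simp [mul_comm]
  · intro e he f hf hef
    simp only [Finset.disjoint_left, mem_ends]
    exact fun x hx => hM.2 e he f hf hef x hx

lemma covered_of_mem {M : Finset (Sym2 (Fin n))} {e : Sym2 (Fin n)} {v : Fin n}
    (he : e ∈ M) (hv : v ∈ e) : Covered M v := ⟨e, he, hv⟩

lemma IsFM.insert_fresh {G : SimpleGraph (Fin n)} {M : Finset (Sym2 (Fin n))} {u w : Fin n}
    (hM : IsFM G M) (hadj : G.Adj u w) (hu : ¬ Covered M u) (hw : ¬ Covered M w) :
    IsFM G (insert s(u, w) M) ∧ M.card < (insert s(u, w) M).card := by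
  have hns : s(u, w) ∉ M := fun h => hu (covered_of_mem h (by simp))
  refine ⟨⟨?_, ?_⟩, by rw [card_insert_of_notMem hns]; omega⟩
  · intro e he
    rcases Finset.mem_insert.1 he with rfl | he
    · exact hadj
    · exact hM.1 e he
  · intro e he' f hf' hef z hze hzf
    rcases Finset.mem_insert.1 he' with rfl | heM
    · rcases Finset.mem_insert.1 hf' with rfl | hfM
      · exact hef rfl
      · rcases Sym2.mem_iff.1 hze with rfl | rfl
        · exact hu (covered_of_mem hfM hzf)
        · exact hw (covered_of_mem hfM hzf)
    · rcases Finset.mem_insert.1 hf' with rfl | hfM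
      · rcases Sym2.mem_iff.1 hzf with rfl | rfl
        · exact hu (covered_of_mem heM hze)
        · exact hw (covered_of_mem heM hze)
      · exact hM.2 e heM f hfM hef z hze hzf

lemma swap_aug {G : SimpleGraph (Fin n)} {M : Finset (Sym2 (Fin n))} {u v x y : Fin n}
    (hM : IsFM G M) (he : s(x, y) ∈ M) (hu : ¬ Covered M u) (hv : ¬ Covered M v)
    (huv : u ≠ v) (hux : G.Adj u x) (hvy : G.Adj v y) :
    ∃ M' : Finset (Sym2 (Fin n)), IsFM G M' ∧ M.card < M'.card := by
  classical
  have hxy : x ≠ y := by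
    intro h
    exact (G.not_isDiag_of_mem_edgeSet (hM.1 _ he)) (by simp [h])
  have hcx : Covered M x := covered_of_mem he (by simp)
  have hcy : Covered M y := covered_of_mem he (by simp)
  have huy : u ≠ y := fun h => hu (h ▸ hcy)
  have hvx : v ≠ x := fun h => hv (h ▸ hcx)
  set M' := insert s(u, x) (insert s(v, y) (M.erase s(x, y))) with hM'
  have hvyE : s(v, y) ∉ M.erase s(x, y) := fun h =>
    hv (covered_of_mem (Finset.mem_of_mem_erase h) (by simp))
  have huxI : s(u, x) ∉ insert s(v, y) (M.erase s(x, y)) := by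
    intro h
    rcases Finset.mem_insert.1 h with h | h
    · have : u ∈ s(v, y) := h ▸ (by simp : u ∈ s(u, x))
      rcases Sym2.mem_iff.1 this with rfl | rfl
      · exact huv rfl
      · exact huy rfl
    · exact hu (covered_of_mem (Finset.mem_of_mem_erase h) (by simp))
  have hcard : M.card < M'.card := by
    have h1 : 1 ≤ M.card := Finset.card_pos.2 ⟨_, he⟩
    rw [hM', card_insert_of_notMem huxI, card_insert_of_notMem hvyE,
      Finset.card_erase_of_mem he]
    omega
  refine ⟨M', ⟨?_, ?_⟩, hcard⟩
  · intro e heM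
    rcases Finset.mem_insert.1 heM with rfl | heM
    · exact hux
    rcases Finset.mem_insert.1 heM with rfl | heM
    · exact hvy
    · exact hM.1 e (Finset.mem_of_mem_erase heM)
  · -- pairwise disjointness
    have hdisj : ∀ z : Fin n, z ∈ s(u, x) → z ∉ s(v, y) := by
      intro z hz hz'
      rcases Sym2.mem_iff.1 hz with rfl | rfl <;>
        rcases Sym2.mem_iff.1 hz' with h | h
      · exact huv h
      · exact huy h
      · exact hvx h.symm
      · exact hxy h
    have hux_er : ∀ f ∈ M.erase s(x, y), ∀ z : Fin n, z ∈ s(u, x) → z ∉ f := by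
      intro f hf z hz hzf
      have hfM : f ∈ M := Finset.mem_of_mem_erase hf
      have hfne : f ≠ s(x, y) := Finset.ne_of_mem_erase hf
      rcases Sym2.mem_iff.1 hz with rfl | rfl
      · exact hu (covered_of_mem hfM hzf)
      · exact hM.2 _ he _ hfM (Ne.symm hfne) z (by simp) hzf
    have hvy_er : ∀ f ∈ M.erase s(x, y), ∀ z : Fin n, z ∈ s(v, y) → z ∉ f := by
      intro f hf z hz hzf
      have hfM : f ∈ M := Finset.mem_of_mem_erase hf
      have hfne : f ≠ s(x, y) := Finset.ne_of_mem_erase hf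
      rcases Sym2.mem_iff.1 hz with rfl | rfl
      · exact hv (covered_of_mem hfM hzf)
      · exact hM.2 _ he _ hfM (Ne.symm hfne) z (by simp) hzf
    intro e heM f hfM hef z hze hzf
    rcases Finset.mem_insert.1 heM with rfl | heM
    · rcases Finset.mem_insert.1 hfM with rfl | hfM
      · exact hef rfl
      rcases Finset.mem_insert.1 hfM with rfl | hfM
      · exact hdisj z hze hzf
      · exact hux_er f hfM z hze hzf
    rcases Finset.mem_insert.1 heM with rfl | heM
    · rcases Finset.mem_insert.1 hfM with rfl | hfM
      · exact hdisj z hzf hze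
      rcases Finset.mem_insert.1 hfM with rfl | hfM
      · exact hef rfl
      · exact hvy_er f hfM z hze hzf
    · rcases Finset.mem_insert.1 hfM with rfl | hfM
      · exact hux_er e heM z hzf hze
      rcases Finset.mem_insert.1 hfM with rfl | hfM
      · exact hvy_er e heM z hzf hze
      · exact hM.2 e (Finset.mem_of_mem_erase heM) f (Finset.mem_of_mem_erase hfM) hef z hze hzf

lemma card_pair_filter {x y : Fin n} (hxy : x ≠ y) (p : Fin n → Prop) [DecidablePred p] :
    (({x, y} : Finset (Fin n)).filter p).card
      = (if p x then 1 else 0) + (if p y then 1 else 0) := by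
  rw [Finset.filter_insert, Finset.filter_singleton]
  by_cases hx : p x <;> by_cases hy : p y <;>
    simp [hx, hy, Finset.card_insert_of_notMem, hxy]

theorem exists_pm_of_minDegree (G : SimpleGraph (Fin n)) [DecidableRel G.Adj]
    (hn : n % 2 = 0) (hdeg : ∀ v, n / 2 ≤ G.degree v) :
    ∃ M : G.Subgraph, M.IsPerfectMatching := by
  classical
  obtain ⟨M, hMmem, hmax⟩ :=
    Finset.exists_max_image ((Finset.univ : Finset (Finset (Sym2 (Fin n)))).filter
      (fun M => IsFM G M)) Finset.card ⟨∅, Finset.mem_filter.2 ⟨Finset.mem_univ _, by simp [IsFM]⟩⟩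
  have hM : IsFM G M := (Finset.mem_filter.1 hMmem).2
  have hmax' : ∀ M' : Finset (Sym2 (Fin n)), IsFM G M' → M'.card ≤ M.card := by
    intro M' h
    exact hmax M' (Finset.mem_filter.2 ⟨Finset.mem_univ _, h⟩)
  have hall : ∀ v : Fin n, Covered M v := by
    by_contra hcon
    push_neg at hcon
    obtain ⟨u₀, hu₀⟩ := hcon
    -- the uncovered set has even cardinality ≥ 1, hence ≥ 2
    set U := Finset.univ.filter (fun v => ¬ Covered M v) with hU
    have hsplit : (Finset.univ.filter (Covered M)).card + U.card = n := by
      rw [hU]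
      simpa using Finset.card_filter_add_card_filter_not
        (s := (Finset.univ : Finset (Fin n))) (p := Covered M)
    have hu₀U : u₀ ∈ U := by simp [hU, hu₀]
    have hUcard : 2 ≤ U.card := by
      have h1 : 1 ≤ U.card := Finset.card_pos.2 ⟨u₀, hu₀U⟩
      have h2 := card_covered hM
      omega
    obtain ⟨u, hu', v, hv', huv⟩ := Finset.one_lt_card.1 hUcard
    have hu : ¬ Covered M u := (Finset.mem_filter.1 hu').2
    have hv : ¬ Covered M v := (Finset.mem_filter.1 hv').2
    -- all neighbors of an uncovered vertex are covered
    have hnbr : ∀ z w : Fin n, ¬ Covered M z → G.Adj z w → Covered M w := by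
      intro z w hz hzw
      by_contra hw
      obtain ⟨_, hlt⟩ := hM.insert_fresh hzw hz hw
      exact absurd (hmax' _ (hM.insert_fresh hzw hz hw).1) (by omega)
    -- degree as a sum over matching edges
    have hsum : ∀ z : Fin n, ¬ Covered M z →
        G.degree z = ∑ e ∈ M, (G.neighborFinset z ∩ ends e).card := by
      intro z hz
      have heq : G.neighborFinset z = M.biUnion (fun e => G.neighborFinset z ∩ ends e) := by
        apply Finset.Subset.antisymm
        · intro w hw
          have hcw : Covered M w := hnbr z w hz ((SimpleGraph.mem_neighborFinset _ _ _).1 hw)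
          obtain ⟨e, he, hwe⟩ := hcw
          exact Finset.mem_biUnion.2 ⟨e, he, Finset.mem_inter.2 ⟨hw, mem_ends.2 hwe⟩⟩
        · intro w hw
          obtain ⟨e, _, hwe⟩ := Finset.mem_biUnion.1 hw
          exact (Finset.mem_inter.1 hwe).1
      rw [SimpleGraph.degree]
      conv_lhs => rw [heq]
      rw [Finset.card_biUnion]
      intro e he f hf hef
      simp only [Finset.disjoint_left, Finset.mem_inter, mem_ends]
      rintro w ⟨-, hwe⟩ ⟨-, hwf⟩
      exact hM.2 e he f hf hef w hwe hwf
    -- some matching edge receives at least 3 adjacencies from u and v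
    have key : ∃ e ∈ M, 3 ≤ (G.neighborFinset u ∩ ends e).card
        + (G.neighborFinset v ∩ ends e).card := by
      by_contra hcon3
      push_neg at hcon3
      have hle : ∑ e ∈ M, ((G.neighborFinset u ∩ ends e).card
          + (G.neighborFinset v ∩ ends e).card) ≤ 2 * M.card := by
        calc ∑ e ∈ M, ((G.neighborFinset u ∩ ends e).card
              + (G.neighborFinset v ∩ ends e).card)
            ≤ ∑ _e ∈ M, 2 := Finset.sum_le_sum (fun e he => by have := hcon3 e he; omega)
          _ = 2 * M.card := by rw [Finset.sum_const]; ring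
      have hdu := hsum u hu
      have hdv := hsum v hv
      have hsum2 : G.degree u + G.degree v ≤ 2 * M.card := by
        rw [hdu, hdv, ← Finset.sum_add_distrib]
        exact hle
      have h2 := card_covered hM
      have hU1 : U.card + 2 * M.card = n := by omega
      have := hdeg u
      have := hdeg v
      omega
    obtain ⟨e, he, h3⟩ := key
    revert he h3
    induction e using Sym2.ind with
    | _ x y =>
      intro he h3
      have hxy : x ≠ y := fun h =>
        (G.not_isDiag_of_mem_edgeSet (hM.1 _ he)) (by simp [h])
      rw [ends_mk, Finset.inter_comm, ← Finset.filter_mem_eq_inter,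
        Finset.inter_comm, ← Finset.filter_mem_eq_inter,
        card_pair_filter hxy, card_pair_filter hxy] at h3
      simp only [SimpleGraph.mem_neighborFinset] at h3
      have hcase : (G.Adj u x ∧ G.Adj v y) ∨ (G.Adj u y ∧ G.Adj v x) := by
        by_cases h1 : G.Adj u x <;> by_cases h2 : G.Adj u y <;>
          by_cases h3' : G.Adj v x <;> by_cases h4 : G.Adj v y <;>
          simp [h1, h2, h3', h4] at h3 ⊢
      rcases hcase with ⟨h1, h2⟩ | ⟨h1, h2⟩
      · obtain ⟨M', hM', hlt⟩ := swap_aug hM he hu hv huv h1 h2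
        exact absurd (hmax' M' hM') (by omega)
      · obtain ⟨M', hM', hlt⟩ := swap_aug hM (Sym2.eq_swap ▸ he) hu hv huv h1 h2
        exact absurd (hmax' M' hM') (by omega)
  -- build the perfect matching subgraph
  refine ⟨⟨Set.univ, fun a b => s(a, b) ∈ M, ?_, fun {a b} h => Set.mem_univ a, ?_⟩, ?_, ?_⟩
  · intro a b hab
    exact (SimpleGraph.mem_edgeSet G).1 (hM.1 _ hab)
  · refine ⟨fun a b h => ?_⟩
    rwa [Sym2.eq_swap]
  · intro a _
    obtain ⟨e, he, hae⟩ := hall a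
    obtain ⟨b, rfl⟩ := Sym2.mem_iff_exists.1 hae
    refine ⟨b, he, ?_⟩
    intro b' hb'
    by_contra hne
    have hne' : s(a, b) ≠ s(a, b') := fun h => hne (Sym2.congr_right.1 h).symm
    exact hM.2 _ he _ hb' hne' a (by simp) (by simp)
  · intro a
    exact Set.mem_univ a

lemma mod_inv_lem {m i a : ℕ} (hi : i < m) (ha : a < m) :
    ((a + i) % m + (m - i)) % m = a := by
  rw [Nat.mod_add_mod]
  have h1 : a + i + (m - i) = a + m := by omega
  rw [h1, Nat.add_mod_right]
  exact Nat.mod_eq_of_lt ha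

lemma add_mod_mod (x B m : ℕ) : (x + B % m) % m = (x + B) % m := by
  conv_lhs => rw [Nat.add_mod]
  conv_rhs => rw [Nat.add_mod]
  rw [Nat.mod_mod_of_dvd _ dvd_rfl]

/-- the cross matchings in `K_{2m}`: an explicit 1-factorization of `K_{m,m}`. -/
lemma construction (n m : ℕ) (hm : n = 2 * m) (hm0 : 0 < m) :
    ∃ M : Fin m → (⊤ : SimpleGraph (Fin n)).Subgraph,
      (∀ i, (M i).IsPerfectMatching) ∧
      (∀ i j, i ≠ j → Disjoint (M i).edgeSet (M j).edgeSet) ∧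
      (∀ x y : Fin n, x.val < m → m ≤ y.val → s(x, y) ∈ ⋃ i, (M i).edgeSet) := by
  have hlt : ∀ a : ℕ, m + a % m < n := fun a => by
    have := Nat.mod_lt a hm0; omega
  refine ⟨fun i =>
    { verts := Set.univ
      Adj := fun x y =>
        (x.val < m ∧ y.val = m + (x.val + i.val) % m) ∨
          (y.val < m ∧ x.val = m + (y.val + i.val) % m)
      adj_sub := ?_
      edge_vert := fun _ => Set.mem_univ _
      symm := ⟨fun x y h => h.symm⟩ }, ?_, ?_, ?_⟩
  · rintro x y (⟨h1, h2⟩ | ⟨h1, h2⟩) <;>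
    · simp only [SimpleGraph.top_adj]
      intro h
      subst h
      omega
  · -- perfect matchings
    intro i
    rw [SimpleGraph.Subgraph.isPerfectMatching_iff]
    intro v
    by_cases hv : v.val < m
    · refine ⟨⟨m + (v.val + i.val) % m, hlt _⟩, Or.inl ⟨hv, rfl⟩, ?_⟩
      rintro w (⟨h1, h2⟩ | ⟨h1, h2⟩)
      · exact Fin.ext h2
      · omega
    · have hvm : m ≤ v.val := le_of_not_gt hv
      have hvn : v.val < n := v.isLt
      have hw : (v.val - m + (m - i.val)) % m < n := by
        have := Nat.mod_lt (v.val - m + (m - i.val)) hm0; omega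
      have hkey : ∀ w : ℕ, w < m → (m + (w + i.val) % m = v.val ↔
          w = (v.val - m + (m - i.val)) % m) := by
        intro w hwm
        constructor
        · intro h
          have h2 : (w + i.val) % m = v.val - m := by omega
          rw [← h2, mod_inv_lem i.isLt hwm]
        · rintro rfl
          rw [Nat.mod_add_mod]
          have h3 : v.val - m + (m - i.val) + i.val = (v.val - m) + m := by
            have := i.isLt; omega
          rw [h3, Nat.add_mod_right, Nat.mod_eq_of_lt (by omega)]
          omega
      refine ⟨⟨(v.val - m + (m - i.val)) % m, hw⟩, ?_, ?_⟩
      · refine Or.inr ⟨Nat.mod_lt _ hm0, ?_⟩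
        exact ((hkey _ (Nat.mod_lt _ hm0)).2 rfl).symm
      · rintro w (⟨h1, h2⟩ | ⟨h1, h2⟩)
        · omega
        · exact Fin.ext ((hkey w.val h1).1 h2.symm)
  · -- pairwise edge-disjointness
    intro i j hij
    rw [Set.disjoint_left]
    intro e hei hej
    revert hei hej
    induction e using Sym2.ind with
    | _ x y =>
      intro hei hej
      rw [SimpleGraph.Subgraph.mem_edgeSet] at hei hej
      apply hij
      have main : ∀ x' y' : Fin n, ((x'.val < m ∧ y'.val = m + (x'.val + i.val) % m) →
          (x'.val < m ∧ y'.val = m + (x'.val + j.val) % m) → i = j) := by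
        intro x' y' ⟨h1, h2⟩ ⟨h3, h4⟩
        have : (x'.val + i.val) % m = (x'.val + j.val) % m := by omega
        have hi := mod_inv_lem h1 i.isLt
        have hj := mod_inv_lem h1 j.isLt
        apply Fin.ext
        rw [← hi, ← hj, Nat.add_comm i.val x'.val, Nat.add_comm j.val x'.val, this]
      rcases hei with h | h <;> rcases hej with h' | h'
      · exact main x y h h'
      · omega
      · omega
      · exact main y x h h'
  · -- coverage of all cross edges
    intro x y hx hy
    have hyn : y.val < n := y.isLt
    refine Set.mem_iUnion.2 ⟨⟨(y.val - m + (m - x.val)) % m, Nat.mod_lt _ hm0⟩, ?_⟩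
    rw [SimpleGraph.Subgraph.mem_edgeSet]
    refine Or.inl ⟨hx, ?_⟩
    rw [add_mod_mod]
    have h1 : x.val + (y.val - m + (m - x.val)) = (y.val - m) + m := by omega
    rw [h1, Nat.add_mod_right, Nat.mod_eq_of_lt (by omega)]
    omega

lemma card_filter_lt (n m : ℕ) (hmn : m ≤ n) :
    (Finset.univ.filter (fun v : Fin n => v.val < m)).card = m := by
  have h : ∀ a ∈ Finset.range m, a < n := fun a ha => lt_of_lt_of_le (Finset.mem_range.1 ha) hmn
  have : Finset.univ.filter (fun v : Fin n => v.val < m) = (Finset.range m).attachFin h := by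
    ext v
    simp [Finset.mem_attachFin]
  rw [this, Finset.card_attachFin, Finset.card_range]

/-- For `n ≡ 2 (mod 4)`, the matching persistency of `K_n` equals `n/2`:
`n/2` is the least cardinality of a family of pairwise edge-disjoint perfect
matchings of `K_n` whose removal leaves a graph with no perfect matching.  In
particular such a family of size `n/2` exists. -/
theorem stmt_17 (n : ℕ) (hn : n % 4 = 2) :
    IsLeast
      {k : ℕ | ∃ M : Fin k → (⊤ : SimpleGraph (Fin n)).Subgraph,
        (∀ i, (M i).IsPerfectMatching) ∧
        (∀ i j, i ≠ j → Disjoint (M i).edgeSet (M j).edgeSet) ∧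
        ¬ ∃ N : ((⊤ : SimpleGraph (Fin n)).deleteEdges (⋃ i, (M i).edgeSet)).Subgraph,
            N.IsPerfectMatching}
      (n / 2) := by
  classical
  set m := n / 2 with hmdef
  have hm2 : n = 2 * m := by omega
  have hmodd : m % 2 = 1 := by omega
  have hm0 : 0 < m := by omega
  constructor
  · -- membership: the explicit construction works
    obtain ⟨M, hPM, hdisj, hcover⟩ := construction n m hm2 hm0
    set H := (⊤ : SimpleGraph (Fin n)).deleteEdges (⋃ i, (M i).edgeSet) with hHdef
    refine ⟨M, hPM, hdisj, ?_⟩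
    rintro ⟨N, hN⟩
    have hcross : ∀ x y : Fin n, x.val < m → m ≤ y.val → ¬ H.Adj x y := by
      intro x y hx hy hadj
      rw [hHdef, SimpleGraph.deleteEdges_adj] at hadj
      exact hadj.2 (hcover x y hx hy)
    have hsame : ∀ x y : Fin n, N.Adj x y → x.val < m → y.val < m := by
      intro x y hadj hx
      by_contra hy
      exact hcross x y hx (le_of_not_gt hy) (N.adj_sub hadj)
    have key : ∃ P : (⊤ : SimpleGraph (Fin n)).Subgraph,
        P.verts = {v : Fin n | v.val < m} ∧ P.IsMatching := by
      refine ⟨{ verts := {v : Fin n | v.val < m}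
                Adj := fun a b => N.Adj a b ∧ a.val < m ∧ b.val < m
                adj_sub := fun {a b} h => by
                  have h2 := N.adj_sub h.1
                  rw [SimpleGraph.deleteEdges_adj] at h2
                  exact h2.1
                edge_vert := fun {a b} h => h.2.1
                symm := ⟨fun a b h => ⟨h.1.symm, h.2.2, h.2.1⟩⟩ }, rfl, ?_⟩
      intro v hv
      have hvm : v.val < m := hv
      obtain ⟨w, hw, hwu⟩ := hN.1 (hN.2 v)
      have hwm : w.val < m := hsame v w hw hvm
      exact ⟨w, ⟨hw, hvm, hwm⟩, fun y hy => hwu y hy.1⟩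
    obtain ⟨P, hPv, hPmatch⟩ := key
    haveI : Fintype P.verts := Set.Finite.fintype (Set.toFinite _)
    have heven := hPmatch.even_card
    have hcard : P.verts.toFinset.card = m := by
      have heq2 : P.verts.toFinset = Finset.univ.filter (fun v : Fin n => v.val < m) := by
        ext v
        simp [hPv]
      rw [heq2, card_filter_lt n m (by omega)]
    rw [hcard] at heven
    obtain ⟨t, ht⟩ := heven
    omega
  · -- lower bound
    intro k hk
    by_contra hlt
    push_neg at hlt
    obtain ⟨M, hPM, hdisj, hno⟩ := hk
    set H := (⊤ : SimpleGraph (Fin n)).deleteEdges (⋃ i, (M i).edgeSet) with hHdef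
    haveI : DecidableRel H.Adj := Classical.decRel _
    apply hno
    apply exists_pm_of_minDegree H (by omega)
    intro v
    choose p hp1 hp2 using fun i : Fin k =>
      SimpleGraph.Subgraph.isPerfectMatching_iff.1 (hPM i) v
    have hsub : (Finset.univ.erase v) \ (Finset.univ.image p) ⊆ H.neighborFinset v := by
      intro w hw
      obtain ⟨hw1, hw2⟩ := Finset.mem_sdiff.1 hw
      have hwv : w ≠ v := Finset.ne_of_mem_erase hw1
      rw [SimpleGraph.mem_neighborFinset, hHdef, SimpleGraph.deleteEdges_adj]
      refine ⟨by simpa using hwv.symm, ?_⟩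
      intro hmem
      obtain ⟨_, ⟨i, rfl⟩, hmem2⟩ := hmem
      rw [SimpleGraph.Subgraph.mem_edgeSet] at hmem2
      exact hw2 (Finset.mem_image.2 ⟨i, Finset.mem_univ i, (hp2 i w hmem2).symm⟩)
    have hc1 : (Finset.univ.erase v).card = n - 1 := by
      rw [Finset.card_erase_of_mem (Finset.mem_univ v), Finset.card_univ, Fintype.card_fin]
    have hc2 : (Finset.univ.image p).card ≤ k := by
      calc (Finset.univ.image p).card ≤ (Finset.univ : Finset (Fin k)).card :=
            Finset.card_image_le
        _ = k := by rw [Finset.card_univ, Fintype.card_fin]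
    have hc3 := Finset.card_le_card_sdiff_add_card
      (s := (Finset.univ.erase v)) (t := (Finset.univ.image p))
    have hc4 := Finset.card_le_card hsub
    have hdeg : H.degree v = (H.neighborFinset v).card := rfl
    omega
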